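/- Assume v ≠ 0 and fix s ∈ {0,1,...,K}. For any two reals w, w' both lying in the half-open interval [S_λ̄(|U_(s+1)|), S_λ̄(|U_(s)|)), one has f(w) − f(w') = ((1+sM²)/(2M²)) · ( (w − w_s)² − (w' − w_s)² ); that is, on this interval f is a quadratic in w with vertex at w_s = M(‖v‖₂ − a_s)/(1+sM²). -/

import Mathlib

/-- Soft-thresholding operator `S_t(x) = sign(x) · max(|x| − t, 0)`. -/
noncomputable def st (t x : ℝ) : ℝ := Real.sign x * max (|x| - t) 0

/-- Euclidean (ℓ₂) norm on `ℝ^n`. -/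
noncomputable def l2 {n : ℕ} (x : Fin n → ℝ) : ℝ := Real.sqrt (∑ i, (x i) ^ 2)

/-- ℓ₁ norm on `ℝ^n`. -/
noncomputable def l1 {n : ℕ} (x : Fin n → ℝ) : ℝ := ∑ i, |x i|

/-- `du U σ s = |U_(s)|`, the `s`-th largest absolute entry of `U` (1-based, via a sorting
permutation `σ`), with the out-of-range convention `|U_(s)| = 0` for `s > K`
(so that `S_λ̄(|U_(K+1)|) = 0`). -/
noncomputable def du {K : ℕ} (U : Fin K → ℝ) (σ : Equiv.Perm (Fin K)) (s : ℕ) : ℝ :=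
  if h : s - 1 < K then |U (σ ⟨s - 1, h⟩)| else 0

/-- `a_s = λ − M·Σ_{i=1}^s (|U_(i)| − λ̄)`. -/
noncomputable def aseq {K : ℕ} (U : Fin K → ℝ) (σ : Equiv.Perm (Fin K))
    (lam lamb M : ℝ) (s : ℕ) : ℝ :=
  lam - M * ∑ i ∈ Finset.Icc 1 s, (du U σ i - lamb)

/-- `w_s = M(‖v‖₂ − a_s)/(1+sM²)`. -/
noncomputable def wseq {k K : ℕ} (U : Fin K → ℝ) (σ : Equiv.Perm (Fin K))
    (lam lamb M : ℝ) (v : Fin k → ℝ) (s : ℕ) : ℝ :=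
  M * (l2 v - aseq U σ lam lamb M s) / (1 + (s : ℝ) * M ^ 2)

/-- `W(b)_j = sign(U_j)·min{M‖b‖₂, S_λ̄(|U_j|)}`. -/
noncomputable def Wmap {k K : ℕ} (lamb M : ℝ) (U : Fin K → ℝ) (b : Fin k → ℝ) :
    Fin K → ℝ :=
  fun j => Real.sign (U j) * min (M * l2 b) (st lamb (abs (U j)))

/-- `F(b) = ½‖v − b‖₂² + ½‖U − W(b)‖₂² + λ‖b‖₂ + λ̄‖W(b)‖₁`. -/
noncomputable def Ffun {k K : ℕ} (lam lamb M : ℝ) (v : Fin k → ℝ) (U : Fin K → ℝ)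
    (b : Fin k → ℝ) : ℝ :=
  (1 / 2) * ∑ i, (v i - b i) ^ 2
    + (1 / 2) * ∑ j, (U j - Wmap lamb M U b j) ^ 2
    + lam * l2 b + lamb * l1 (Wmap lamb M U b)

/-- `f(w) = min{ F(b) : b ∈ ℝ^k, M‖b‖₂ = w }` (as an infimum). -/
noncomputable def fmin {k K : ℕ} (lam lamb M : ℝ) (v : Fin k → ℝ) (U : Fin K → ℝ)
    (w : ℝ) : ℝ :=
  sInf (Ffun lam lamb M v U '' {b : Fin k → ℝ | M * l2 b = w})



open Finset

lemma st_of_nonneg {t x : ℝ} (ht : 0 ≤ t) (hx : 0 ≤ x) : st t x = max (x - t) 0 := by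
  rcases eq_or_lt_of_le hx with h | h
  · rw [st, ← h, Real.sign_zero, zero_mul, max_eq_right (by linarith)]
  · rw [st, Real.sign_of_pos h, abs_of_nonneg hx, one_mul]

lemma st_nonneg' {t x : ℝ} (ht : 0 ≤ t) (hx : 0 ≤ x) : 0 ≤ st t x := by
  rw [st_of_nonneg ht hx]; exact le_max_right _ _

lemma st_mono {t x y : ℝ} (ht : 0 ≤ t) (hx : 0 ≤ x) (hxy : x ≤ y) : st t x ≤ st t y := by
  rw [st_of_nonneg ht hx, st_of_nonneg ht (hx.trans hxy)]
  exact max_le_max (by linarith) le_rfl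

lemma du_nonneg {K : ℕ} (U : Fin K → ℝ) (σ : Equiv.Perm (Fin K)) (s : ℕ) :
    0 ≤ du U σ s := by
  rw [du]; split
  · exact abs_nonneg _
  · exact le_rfl

lemma l2_sq {n : ℕ} (x : Fin n → ℝ) : (l2 x) ^ 2 = ∑ i, (x i) ^ 2 :=
  Real.sq_sqrt (by positivity)

lemma l2_smul {n : ℕ} {c : ℝ} (hc : 0 ≤ c) (x : Fin n → ℝ) :
    l2 (fun i => c * x i) = c * l2 x := by
  rw [l2, l2]
  simp_rw [mul_pow]
  rw [← Finset.mul_sum, Real.sqrt_mul (sq_nonneg c), Real.sqrt_sq hc]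

lemma Ffun_eq {k K : ℕ} (lam lamb M : ℝ) (hlamb : 0 ≤ lamb) (hM : 0 < M)
    (v : Fin k → ℝ) (U : Fin K → ℝ) (b : Fin k → ℝ) {w : ℝ} (hb : M * l2 b = w)
    (hw : 0 ≤ w) :
    Ffun lam lamb M v U b
      = (1/2) * ∑ i, (v i)^2 - (∑ i, v i * b i) + (1/2) * (w/M)^2 + lam * (w/M)
        + ∑ j, ((1/2) * (|U j| - min w (st lamb |U j|))^2
            + lamb * min w (st lamb |U j|)) := by
  have hlb : l2 b = w / M := by rw [← hb, mul_div_cancel_left₀ _ hM.ne']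
  have hWterm : ∀ j, (U j - Wmap lamb M U b j)^2 = (|U j| - min w (st lamb |U j|))^2
      ∧ |Wmap lamb M U b j| = min w (st lamb |U j|) := by
    intro j
    have hm0 : 0 ≤ min w (st lamb |U j|) :=
      le_min hw (st_nonneg' hlamb (abs_nonneg _))
    simp only [Wmap, hb]
    rcases lt_trichotomy (U j) 0 with h | h | h
    · rw [Real.sign_of_neg h]
      constructor
      · rw [abs_of_neg h]; ring
      · rw [neg_one_mul, abs_neg, abs_of_nonneg hm0]
    · have hst0 : st lamb (0:ℝ) = 0 := by simp [st]
      simp [h, hst0, min_eq_right hw]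
    · rw [Real.sign_of_pos h, one_mul, abs_of_pos h]
      exact ⟨rfl, abs_of_nonneg (le_min hw (st_nonneg' hlamb h.le))⟩
  have e2 : ∑ j, (U j - Wmap lamb M U b j)^2
      = ∑ j, (|U j| - min w (st lamb |U j|))^2 :=
    Finset.sum_congr rfl fun j _ => (hWterm j).1
  have e3 : ∑ j, |Wmap lamb M U b j| = ∑ j, min w (st lamb |U j|) :=
    Finset.sum_congr rfl fun j _ => (hWterm j).2
  have e1 : ∑ i, (v i - b i)^2
      = ∑ i, (v i)^2 - 2 * ∑ i, v i * b i + ∑ i, (b i)^2 := by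
    have h0 : ∀ i ∈ univ, (v i - b i)^2 = (v i)^2 - 2*(v i * b i) + (b i)^2 :=
      fun i _ => by ring
    rw [Finset.sum_congr rfl h0, Finset.sum_add_distrib, Finset.sum_sub_distrib,
      ← Finset.mul_sum]
  have e4 : ∑ i, (b i)^2 = (w/M)^2 := by rw [← l2_sq b, hlb]
  simp only [Ffun, l1]
  rw [hlb, e1, e2, e3, e4, Finset.sum_add_distrib, ← Finset.mul_sum, ← Finset.mul_sum]
  ring

lemma fmin_eq {k K : ℕ} (lam lamb M : ℝ) (hlamb : 0 ≤ lamb) (hM : 0 < M)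
    (v : Fin k → ℝ) (hv : v ≠ 0) (U : Fin K → ℝ) (w : ℝ) (hw : 0 ≤ w) :
    fmin lam lamb M v U w
      = (1/2) * ∑ i, (v i)^2 - l2 v * (w/M) + (1/2) * (w/M)^2 + lam * (w/M)
        + ∑ j, ((1/2) * (|U j| - min w (st lamb |U j|))^2
            + lamb * min w (st lamb |U j|)) := by
  have hsum : 0 < ∑ i, (v i)^2 := by
    obtain ⟨i, hi⟩ := Function.ne_iff.1 hv
    exact Finset.sum_pos' (fun _ _ => sq_nonneg _)
      ⟨i, Finset.mem_univ i, lt_of_le_of_ne (sq_nonneg _) (Ne.symm (pow_ne_zero 2 hi))⟩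
  have hL : 0 < l2 v := Real.sqrt_pos.2 hsum
  apply IsLeast.csInf_eq
  constructor
  · refine ⟨fun i => (w/(M * l2 v)) * v i, ?_, ?_⟩
    · show M * l2 _ = w
      rw [l2_smul (div_nonneg hw (by positivity)) v]
      field_simp
    · have hb0 : M * l2 (fun i => (w/(M * l2 v)) * v i) = w := by
        rw [l2_smul (div_nonneg hw (by positivity)) v]; field_simp
      rw [Ffun_eq lam lamb M hlamb hM v U _ hb0 hw]
      have : ∑ i, v i * ((w/(M * l2 v)) * v i) = l2 v * (w/M) := by
        have h1 : ∑ i, v i * ((w/(M * l2 v)) * v i)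
            = (w/(M * l2 v)) * ∑ i, (v i)^2 := by
          rw [Finset.mul_sum]; exact Finset.sum_congr rfl fun i _ => by ring
        rw [h1, ← l2_sq v]
        field_simp
      rw [this]
  · rintro x ⟨b, hbmem, rfl⟩
    have hb : M * l2 b = w := hbmem
    rw [Ffun_eq lam lamb M hlamb hM v U b hb hw]
    have hcs : ∑ i, v i * b i ≤ l2 v * (w/M) := by
      have h := Real.sum_mul_le_sqrt_mul_sqrt univ v b
      rw [show Real.sqrt (∑ i, (v i)^2) = l2 v from rfl,
        show Real.sqrt (∑ i, (b i)^2) = l2 b from rfl] at h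
      rw [← hb] at *
      calc ∑ i, v i * b i ≤ l2 v * l2 b := h
        _ = l2 v * (M * l2 b / M) := by rw [mul_div_cancel_left₀ _ hM.ne']
    linarith

/-- Assume `v ≠ 0` and fix `s ∈ {0,…,K}`. For any `w, w'` in the half-open shell interval
`[S_λ̄(|U_(s+1)|), S_λ̄(|U_(s)|))` (upper bound `+∞` when `s = 0`),
`f(w) − f(w') = ((1+sM²)/(2M²))·((w − w_s)² − (w' − w_s)²)`. -/
theorem stmt12 (k K : ℕ) (hk : 1 ≤ k) (hK : 1 ≤ K)
    (lam lamb M : ℝ) (hlam : 0 ≤ lam) (hlamb : 0 ≤ lamb) (hM : 0 < M)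
    (v : Fin k → ℝ) (hv : v ≠ 0) (U : Fin K → ℝ)
    (σ : Equiv.Perm (Fin K))
    (hsort : ∀ i j : Fin K, i ≤ j → |U (σ j)| ≤ |U (σ i)|)
    (s : ℕ) (hs : s ≤ K) :
    ∀ w w' : ℝ,
      (st lamb (du U σ (s + 1)) ≤ w ∧ (0 < s → w < st lamb (du U σ s))) →
      (st lamb (du U σ (s + 1)) ≤ w' ∧ (0 < s → w' < st lamb (du U σ s))) →
      fmin lam lamb M v U w - fmin lam lamb M v U w'
        = ((1 + (s : ℝ) * M ^ 2) / (2 * M ^ 2)) *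
            ((w - wseq U σ lam lamb M v s) ^ 2 - (w' - wseq U σ lam lamb M v s) ^ 2) := by
  intro w w' hwa hwb
  obtain ⟨hw1, hw2⟩ := hwa
  obtain ⟨hw1', hw2'⟩ := hwb
  have hst1 : 0 ≤ st lamb (du U σ (s+1)) := st_nonneg' hlamb (du_nonneg U σ (s+1))
  have hw0 : 0 ≤ w := hst1.trans hw1
  have hw0' : 0 ≤ w' := hst1.trans hw1'
  rw [fmin_eq lam lamb M hlamb hM v hv U w hw0,
    fmin_eq lam lamb M hlamb hM v hv U w' hw0']
  -- key pointwise dichotomy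
  have key : ∀ j : Fin K,
      ((1/2) * (|U j| - min w (st lamb |U j|))^2 + lamb * min w (st lamb |U j|))
        - ((1/2) * (|U j| - min w' (st lamb |U j|))^2 + lamb * min w' (st lamb |U j|))
      = if ((σ.symm j : ℕ) < s) then
          ((1/2)*(w^2 - w'^2) - |U j| * (w - w') + lamb * (w - w')) else 0 := by
    intro j
    have hUj : U j = U (σ (σ.symm j)) := by rw [Equiv.apply_symm_apply]
    by_cases h : (σ.symm j : ℕ) < s
    · rw [if_pos h]
      have hs0 : 0 < s := Nat.lt_of_le_of_lt (Nat.zero_le _) h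
      have hs1K : s - 1 < K := by omega
      have hle : du U σ s ≤ |U j| := by
        rw [du, dif_pos hs1K, hUj]
        exact hsort (σ.symm j) ⟨s-1, hs1K⟩ (by rw [Fin.le_def]; simp; omega)
      have hlt : w < st lamb |U j| :=
        lt_of_lt_of_le (hw2 hs0) (st_mono hlamb (du_nonneg U σ s) hle)
      have hlt' : w' < st lamb |U j| :=
        lt_of_lt_of_le (hw2' hs0) (st_mono hlamb (du_nonneg U σ s) hle)
      rw [min_eq_left hlt.le, min_eq_left hlt'.le]
      ring
    · rw [if_neg h]
      push_neg at h
      have hsK : s < K := lt_of_le_of_lt h (σ.symm j).isLt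
      have hge : |U j| ≤ du U σ (s+1) := by
        rw [du]
        simp only [Nat.add_sub_cancel]
        rw [dif_pos hsK, hUj]
        exact hsort ⟨s, hsK⟩ (σ.symm j) (by rw [Fin.le_def]; exact h)
      have hst2 : st lamb |U j| ≤ st lamb (du U σ (s+1)) :=
        st_mono hlamb (abs_nonneg _) hge
      rw [min_eq_right (hst2.trans hw1), min_eq_right (hst2.trans hw1')]
      ring
  set D : ℝ := ∑ n ∈ range s, du U σ (n+1) with hD
  have hdiff : (∑ j, ((1/2) * (|U j| - min w (st lamb |U j|))^2
        + lamb * min w (st lamb |U j|)))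
      - (∑ j, ((1/2) * (|U j| - min w' (st lamb |U j|))^2
        + lamb * min w' (st lamb |U j|)))
      = (s:ℝ) * ((1/2)*(w^2 - w'^2) + lamb * (w - w')) - (w - w') * D := by
    rw [← Finset.sum_sub_distrib]
    rw [Finset.sum_congr rfl (fun j _ => key j)]
    have e1 : ∑ j : Fin K, (if ((σ.symm j : ℕ) < s) then
          ((1/2)*(w^2 - w'^2) - |U j| * (w - w') + lamb * (w - w')) else 0)
        = ∑ i : Fin K, (if ((i : ℕ) < s) then
          ((1/2)*(w^2 - w'^2) - du U σ ((i:ℕ)+1) * (w - w') + lamb * (w - w')) else 0) := by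
      rw [← Equiv.sum_comp σ (fun j => if ((σ.symm j : ℕ) < s) then
          ((1/2)*(w^2 - w'^2) - |U j| * (w - w') + lamb * (w - w')) else 0)]
      refine Finset.sum_congr rfl fun i _ => ?_
      have hdu : |U (σ i)| = du U σ ((i:ℕ)+1) := by
        rw [du]
        simp only [Nat.add_sub_cancel]
        rw [dif_pos i.isLt, Fin.eta]
      rw [Equiv.symm_apply_apply, hdu]
    rw [e1]
    have e2 : ∑ i : Fin K, (if ((i : ℕ) < s) then
          ((1/2)*(w^2 - w'^2) - du U σ ((i:ℕ)+1) * (w - w') + lamb * (w - w')) else 0)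
        = ∑ n ∈ range K, (if (n < s) then
          ((1/2)*(w^2 - w'^2) - du U σ (n+1) * (w - w') + lamb * (w - w')) else 0) :=
      Fin.sum_univ_eq_sum_range (fun n => if (n < s) then
          ((1/2)*(w^2 - w'^2) - du U σ (n+1) * (w - w') + lamb * (w - w')) else 0) K
    rw [e2, ← Finset.sum_subset (Finset.range_subset_range.2 hs)
      (fun x _ hx => if_neg (by simpa using hx))]
    rw [Finset.sum_congr rfl (fun n hn => if_pos (Finset.mem_range.1 hn))]
    have e3 : ∀ n ∈ range s, ((1/2)*(w^2 - w'^2) - du U σ (n+1) * (w - w') + lamb * (w - w'))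
        = ((1/2)*(w^2 - w'^2) + lamb * (w - w')) - (w - w') * du U σ (n+1) :=
      fun n _ => by ring
    rw [Finset.sum_congr rfl e3, Finset.sum_sub_distrib, Finset.sum_const,
      Finset.card_range, ← Finset.mul_sum, nsmul_eq_mul]
  have haseq : aseq U σ lam lamb M s = lam - M * (D - (s:ℝ) * lamb) := by
    rw [aseq, show Finset.Icc 1 s = Finset.Ico 1 (s+1) from by rw [Finset.Ico_add_one_right_eq_Icc],
      Finset.sum_Ico_eq_sum_range]
    simp only [Nat.add_sub_cancel]
    have : ∀ n ∈ range s, (du U σ (1+n) - lamb) = du U σ (n+1) - lamb :=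
      fun n _ => by rw [Nat.add_comm]
    rw [Finset.sum_congr rfl this, Finset.sum_sub_distrib, Finset.sum_const,
      Finset.card_range, nsmul_eq_mul]
  have hws : wseq U σ lam lamb M v s
      = M * (l2 v - (lam - M * (D - (s:ℝ) * lamb))) / (1 + (s:ℝ) * M^2) := by
    rw [wseq, haseq]
  rw [hws]
  have hden : (1:ℝ) + (s:ℝ) * M^2 ≠ 0 := by positivity
  have hM0 : (M:ℝ) ≠ 0 := hM.ne'
  set Sw := ∑ j, ((1/2) * (|U j| - min w (st lamb |U j|))^2
      + lamb * min w (st lamb |U j|)) with hSw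
  set Sw' := ∑ j, ((1/2) * (|U j| - min w' (st lamb |U j|))^2
      + lamb * min w' (st lamb |U j|)) with hSw'
  have hS : Sw = Sw' + ((s:ℝ) * ((1/2)*(w^2 - w'^2) + lamb * (w - w')) - (w - w') * D) := by
    linarith [hdiff]
  rw [hS]
  field_simp
  ring
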